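/- Assume c(δ) = 1, and let η⁽¹⁾,…,η⁽ʳ⁾ ∈ R_c⁺ be such that for some bijection σ of {1,…,r} one has (η⁽ⁱ⁾,η⁽ʲ⁾) = (e_{σ(i)},e_{σ(j)}) for all i,j. Then {η⁽¹⁾,…,η⁽ʳ⁾} is a set of simple roots for R_c: every element of R_c⁺ is an ℕ-linear combination of η⁽¹⁾,…,η⁽ʳ⁾, and for all integers m_1,…,m_r one has Σ_i m_i·e_{σ(i)} ∈ Φ if and only if Σ_i m_i·η⁽ⁱ⁾ ∈ R_c (so R_c is isomorphic to Φ as a root system). -/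

import Mathlib

open Finset

namespace AffineRoots

/-- The vertex set `I = {0,1,…,r}` of the graph. -/
abbrev I (r : ℕ) := Fin (r + 1)

/-- The root lattice `Q = ℤ^I`. -/
abbrev Q (r : ℕ) := I r → ℤ

variable (r : ℕ)

/-- The standard basis vector (simple root) `e_i` of `Q`. -/
def e (i : I r) : Q r := Pi.single i 1

/-- The Cartan pairing matrix `(e_i, e_j) = 2·[i=j] − a_{ij}` attached to a graph with
`a i j` edges between `i` and `j`. -/
def cartan (a : I r → I r → ℕ) (i j : I r) : ℤ :=
  (if i = j then 2 else 0) - (a i j : ℤ)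

/-- The symmetric bilinear form on `Q` determined by the Cartan pairing. -/
def B (a : I r → I r → ℕ) (α β : Q r) : ℤ :=
  ∑ i, ∑ j, α i * cartan r a i j * β j

/-- The reflection `s_i(α) = α − (α,e_i)·e_i`. -/
def refl (a : I r → I r → ℕ) (i : I r) (α : Q r) : Q r :=
  α - B r a α (e r i) • e r i

/-- The Weyl group `W`: the group of bijections of `Q` generated by the reflections. -/
def W (a : I r → I r → ℕ) : Subgroup (Equiv.Perm (Q r)) :=
  Subgroup.closure {σ | ∃ i : I r, ∀ α, σ α = refl r a i α}

/-- The support of `α` is connected in the graph. -/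
def SuppConnected (a : I r → I r → ℕ) (α : Q r) : Prop :=
  ∀ i j : I r, α i ≠ 0 → α j ≠ 0 →
    Relation.ReflTransGen (fun x y => α x ≠ 0 ∧ α y ≠ 0 ∧ 0 < a x y) i j

/-- The fundamental region `F`: nonzero `α ∈ ℕ^I` with connected support and
`(α,e_i) ≤ 0` for all `i`. -/
def Fund (a : I r → I r → ℕ) : Set (Q r) :=
  {α | α ≠ 0 ∧ (∀ i, 0 ≤ α i) ∧ SuppConnected r a α ∧ ∀ i, B r a α (e r i) ≤ 0}

/-- The real roots: the `W`-orbits of the basis vectors. -/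
def RealRoots (a : I r → I r → ℕ) : Set (Q r) :=
  {α | ∃ σ ∈ W r a, ∃ i, α = σ (e r i)}

/-- The imaginary roots: `W·F` and its negative. -/
def ImRoots (a : I r → I r → ℕ) : Set (Q r) :=
  {α | ∃ σ ∈ W r a, ∃ β ∈ Fund r a, α = σ β ∨ α = -(σ β)}

/-- The root system `R`, consisting of all real and imaginary roots. -/
def Roots (a : I r → I r → ℕ) : Set (Q r) := RealRoots r a ∪ ImRoots r a

/-- The positive roots `R⁺ = R ∩ ℕ^I`. -/
def PosRoots (a : I r → I r → ℕ) : Set (Q r) :=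
  {α ∈ Roots r a | ∀ i, 0 ≤ α i}

/-- `R_c = {α ∈ R : c(α) = 0}`. -/
def Rc (a : I r → I r → ℕ) (c : Q r →ₗ[ℤ] ℂ) : Set (Q r) :=
  {α ∈ Roots r a | c α = 0}

/-- `R_c⁺ = R_c ∩ R⁺`. -/
def RcPos (a : I r → I r → ℕ) (c : Q r →ₗ[ℤ] ℂ) : Set (Q r) :=
  Rc r a c ∩ PosRoots r a

/-- `Δ(c)`: the minimal elements of `R_c⁺`, i.e. those which cannot be written as a sum
of two elements of `R_c⁺`. -/
def Dc (a : I r → I r → ℕ) (c : Q r →ₗ[ℤ] ℂ) : Set (Q r) :=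
  {α ∈ RcPos r a c | ¬ ∃ β ∈ RcPos r a c, ∃ γ ∈ RcPos r a c, α = β + γ}

/-- The hypotheses characterizing a simply laced affine Dynkin graph, together with the
distinguished imaginary root `δ`: the graph (with `a i j` edges between `i` and `j`) is
symmetric, loopless and connected; the Cartan form is positive semidefinite; and the
radical of the form is `ℤδ`, where `δ` has positive coordinates and `δ_0 = 1`. -/
structure AffineData (a : I r → I r → ℕ) (δ : Q r) : Prop where
  symm : ∀ i j, a i j = a j i
  noloops : ∀ i, a i i = 0
  connected : ∀ i j : I r, Relation.ReflTransGen (fun x y => 0 < a x y) i j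
  posSemidef : ∀ α : Q r, 0 ≤ B r a α α
  delta_pos : ∀ i, 0 < δ i
  delta_zero : δ 0 = 1
  radical : ∀ α : Q r, (∀ β, B r a α β = 0) ↔ ∃ n : ℤ, α = n • δ

end AffineRoots

namespace AffineRoots

/-- The finite root system `Φ = {α ∈ R : α_0 = 0}` with simple roots `e_1,…,e_r`. -/
def Phi (r : ℕ) (a : I r → I r → ℕ) : Set (Q r) :=
  {α ∈ Roots r a | α 0 = 0}

end AffineRoots

namespace AffineRoots

variable {r : ℕ} {a : I r → I r → ℕ} {δ : Q r}

lemma B_add_left (x y z : Q r) : B r a (x + y) z = B r a x z + B r a y z := by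
  simp [B, Pi.add_apply, add_mul, Finset.sum_add_distrib]

lemma B_smul_left (n : ℤ) (x z : Q r) : B r a (n • x) z = n * B r a x z := by
  simp [B, Finset.mul_sum, mul_assoc]

lemma B_add_right (x y z : Q r) : B r a x (y + z) = B r a x y + B r a x z := by
  simp [B, Pi.add_apply, mul_add, Finset.sum_add_distrib]

lemma B_smul_right (n : ℤ) (x z : Q r) : B r a x (n • z) = n * B r a x z := by
  simp [B, Finset.mul_sum]; ring_nf
  apply Finset.sum_congr rfl; intro i _
  apply Finset.sum_congr rfl; intro j _
  ring

/-- `B` as a bilinear map. -/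
def Bf (r : ℕ) (a : I r → I r → ℕ) : Q r →ₗ[ℤ] Q r →ₗ[ℤ] ℤ :=
  LinearMap.mk₂ ℤ (B r a) B_add_left B_smul_left B_add_right B_smul_right

lemma Bf_apply (x y : Q r) : Bf r a x y = B r a x y := rfl

lemma B_symm (h : ∀ i j, a i j = a j i) (x y : Q r) : B r a x y = B r a y x := by
  rw [B, B, Finset.sum_comm]
  apply Finset.sum_congr rfl; intro i _
  apply Finset.sum_congr rfl; intro j _
  rw [cartan, cartan, h j i]
  by_cases hij : i = j <;> simp [hij, eq_comm] <;> ring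

lemma B_e_e (i j : I r) : B r a (e r i) (e r j) = cartan r a i j := by
  simp [B, e, Pi.single_apply]

lemma B_e_self (h : ∀ i, a i i = 0) (i : I r) : B r a (e r i) (e r i) = 2 := by
  rw [B_e_e, cartan, h]; simp

end AffineRoots
namespace AffineRoots

variable {r : ℕ} {a : I r → I r → ℕ} {δ : Q r}

/-- Expansion of `B` in the second argument over the basis. -/
lemma B_basis_expand (x y : Q r) : B r a x y = ∑ j, B r a x (e r j) * y j := by
  rw [B]
  rw [Finset.sum_comm]
  apply Finset.sum_congr rfl; intro j _
  rw [B]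
  simp [e, Pi.single_apply, Finset.sum_mul]

lemma B_delta_left (hdata : AffineData r a δ) (x : Q r) : B r a δ x = 0 :=
  ((hdata.radical δ).2 ⟨1, (one_smul ℤ δ).symm⟩) x

lemma B_delta_right (hdata : AffineData r a δ) (x : Q r) : B r a x δ = 0 := by
  rw [B_symm hdata.symm]; exact B_delta_left hdata x

lemma B_self_delta (hdata : AffineData r a δ) : B r a δ δ = 0 := B_delta_left hdata δ

/-- An isotropic vector lies in the radical. -/
lemma isotropic_radical (hdata : AffineData r a δ) (x : Q r)
    (hx : B r a x x = 0) : ∃ n : ℤ, x = n • δ := by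
  rw [← hdata.radical]
  intro y
  by_contra hk
  set k := B r a x y with hkdef
  have hsym := B_symm (a := a) hdata.symm
  have key : ∀ t : ℤ, 0 ≤ 2 * t * k + B r a y y := by
    intro t
    have h0 := hdata.posSemidef (t • x + y)
    simp only [B_add_left, B_add_right, B_smul_left, B_smul_right, hx, hsym y x,
      ← hkdef] at h0
    nlinarith [h0]
  have hyy : 0 ≤ B r a y y := hdata.posSemidef y
  have h1 := key (-(k * (B r a y y + 1)))
  have hk2 : 1 ≤ k^2 := by
    rcases lt_or_gt_of_ne hk with h | h <;> nlinarith
  nlinarith [hyy]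

/-- The quadratic form takes even values. -/
lemma B_self_even (hdata : AffineData r a δ) (x : Q r) : Even (B r a x x) := by
  have h2 : ((B r a x x : ℤ) : ZMod 2) = 0 := by
    rw [B]
    push_cast
    have hcast : ∀ i j : I r, ((cartan r a i j : ℤ) : ZMod 2) = (a i j : ZMod 2) := by
      intro i j
      rw [cartan]
      push_cast
      by_cases hij : i = j <;>
        simp [hij, CharTwo.two_eq_zero, CharTwo.neg_eq, sub_eq_add_neg]
    calc (∑ i, ∑ j, (x i : ZMod 2) * ((cartan r a i j : ℤ) : ZMod 2) * (x j : ZMod 2))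
        = ∑ p ∈ Finset.univ ×ˢ (Finset.univ : Finset (I r)),
            (x p.1 : ZMod 2) * (a p.1 p.2 : ZMod 2) * (x p.2 : ZMod 2) := by
          rw [Finset.sum_product]
          exact Finset.sum_congr rfl fun i _ => Finset.sum_congr rfl fun j _ => by rw [hcast]
      _ = 0 := by
          apply Finset.sum_involution (fun p _ => Prod.swap p)
          · intro p _
            have h : (a p.2 p.1 : ZMod 2) = (a p.1 p.2 : ZMod 2) := by rw [hdata.symm]
            show _ + (x p.2 : ZMod 2) * (a p.2 p.1 : ZMod 2) * (x p.1 : ZMod 2) = 0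
            rw [h]
            have : (x p.2 : ZMod 2) * (a p.1 p.2 : ZMod 2) * (x p.1 : ZMod 2)
                = (x p.1 : ZMod 2) * (a p.1 p.2 : ZMod 2) * (x p.2 : ZMod 2) := by ring
            rw [this, CharTwo.add_self_eq_zero]
          · intro p _ hne hswap
            apply hne
            have h1 : p.1 = p.2 := by
              have := congrArg Prod.fst hswap
              simpa using this.symm
            rw [h1, hdata.noloops]
            simp
          · intro p _; exact Finset.mem_univ _
          · intro p _; simp
  exact even_iff_two_dvd.mpr
    (by exact_mod_cast (ZMod.intCast_zmod_eq_zero_iff_dvd _ 2).mp h2)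

end AffineRoots
namespace AffineRoots

variable {r : ℕ} {a : I r → I r → ℕ} {δ : Q r}

lemma B_sub_left (x y z : Q r) : B r a (x - y) z = B r a x z - B r a y z := by
  simp [B, Pi.sub_apply, sub_mul, Finset.sum_sub_distrib]

lemma B_sub_right (x y z : Q r) : B r a x (y - z) = B r a x y - B r a x z := by
  simp [B, Pi.sub_apply, mul_sub, Finset.sum_sub_distrib]

lemma B_e_bound (hdata : AffineData r a δ) (x : Q r) (hx : B r a x x = 2) (i : I r) :
    (B r a x (e r i)) ^ 2 ≤ 4 := by
  set k := B r a x (e r i) with hk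
  have h0 := hdata.posSemidef ((2 : ℤ) • x - k • e r i)
  simp only [B_sub_left, B_sub_right, B_smul_left, B_smul_right, hx,
    B_e_self hdata.noloops, B_symm hdata.symm (e r i) x, ← hk] at h0
  nlinarith [h0]

lemma B_eq_two_case (hdata : AffineData r a δ) (x : Q r) (hx : B r a x x = 2) (i : I r)
    (h2 : B r a x (e r i) = 2) : ∃ m : ℤ, x = e r i + m • δ := by
  have h0 : B r a (x - e r i) (x - e r i) = 0 := by
    simp only [B_sub_left, B_sub_right, hx, B_e_self hdata.noloops,
      B_symm hdata.symm (e r i) x, h2]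
    ring
  obtain ⟨m, hm⟩ := isotropic_radical hdata _ h0
  exact ⟨m, by rw [← hm]; ring⟩

lemma delta_ne_isotropic (hdata : AffineData r a δ) {x : Q r} (hx : B r a x x = 2)
    (n : ℤ) : x ≠ n • δ := by
  intro h
  rw [h, B_smul_left, B_smul_right, B_self_delta hdata] at hx
  simp at hx

/-- Every norm-2 vector has all coordinates of the same sign. -/
lemma sign_uniform (hdata : AffineData r a δ) (x : Q r) (hx : B r a x x = 2) :
    (∀ i, 0 ≤ x i) ∨ (∀ i, x i ≤ 0) := by
  set xp : Q r := fun i => max (x i) 0 with hxp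
  set xm : Q r := fun i => max (-(x i)) 0 with hxm
  have hpnn : ∀ i, 0 ≤ xp i := fun i => le_max_right _ _
  have hmnn : ∀ i, 0 ≤ xm i := fun i => le_max_right _ _
  have hsplit : x = xp - xm := by
    funext i
    simp only [hxp, hxm, Pi.sub_apply]
    rcases le_total (x i) 0 with h | h
    · rw [max_eq_right h, max_eq_left (by omega)]; ring
    · rw [max_eq_left h, max_eq_right (by omega)]; ring
  have hdisj : ∀ i, xp i * xm i = 0 := by
    intro i
    rcases le_total (x i) 0 with h | h
    · simp [hxp, hxm, max_eq_right h]
    · simp [hxp, hxm, max_eq_right (show -(x i) ≤ 0 by omega), mul_comm]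
  have hcross : B r a xp xm ≤ 0 := by
    rw [B]
    apply Finset.sum_nonpos; intro i _
    apply Finset.sum_nonpos; intro j _
    by_cases hij : i = j
    · subst hij
      rw [mul_assoc, mul_comm (cartan r a i i), ← mul_assoc, hdisj i]
      simp
    · have hc : cartan r a i j ≤ 0 := by
        rw [cartan, if_neg hij]
        have := Int.ofNat_nonneg (a i j)
        omega
      have h1 := hpnn i
      have h2 := hmnn j
      nlinarith [mul_nonneg h1 h2]
  have hexp : B r a x x = B r a xp xp - B r a xp xm - B r a xm xp + B r a xm xm := by
    rw [hsplit, B_sub_left, B_sub_right, B_sub_right]; ring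
  have hsym : B r a xm xp = B r a xp xm := B_symm hdata.symm _ _
  have hp : 0 ≤ B r a xp xp := hdata.posSemidef xp
  have hm : 0 ≤ B r a xm xm := hdata.posSemidef xm
  obtain ⟨p, hp2⟩ := B_self_even hdata xp
  obtain ⟨q, hq2⟩ := B_self_even hdata xm
  have hsum : B r a xp xp + B r a xm xm ≤ 2 := by
    rw [hx] at hexp; omega
  have hcases : B r a xp xp = 0 ∨ B r a xm xm = 0 := by omega
  rcases hcases with h0 | h0
  · -- xp is radical
    obtain ⟨n, hn⟩ := isotropic_radical hdata xp h0
    have hn0 : 0 ≤ n := by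
      have := hpnn 0
      rw [hn] at this
      simpa [hdata.delta_zero] using this
    rcases eq_or_lt_of_le hn0 with h | h
    · -- n = 0, so xp = 0, x ≤ 0
      right
      intro i
      have : xp i = 0 := by rw [hn, ← h]; simp
      simp only [hxp] at this
      omega
    · -- n ≥ 1: all coords of x positive, so x = xp = n δ: contradiction
      exfalso
      have hxpos : ∀ i, 0 < x i := by
        intro i
        have h1 : 0 < xp i := by
          rw [hn]
          exact mul_pos h (hdata.delta_pos i)
        simp only [hxp, lt_max_iff] at h1
        rcases h1 with h1 | h1
        · exact h1
        · omega
      have hxpx : xp = x := by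
        funext i
        simp [hxp, max_eq_left (hxpos i).le]
      rw [hxpx] at hn
      exact delta_ne_isotropic hdata hx n hn
  · -- xm is radical
    obtain ⟨n, hn⟩ := isotropic_radical hdata xm h0
    have hn0 : 0 ≤ n := by
      have := hmnn 0
      rw [hn] at this
      simpa [hdata.delta_zero] using this
    rcases eq_or_lt_of_le hn0 with h | h
    · left
      intro i
      have : xm i = 0 := by rw [hn, ← h]; simp
      simp only [hxm] at this
      omega
    · exfalso
      have hxneg : ∀ i, x i < 0 := by
        intro i
        have h1 : 0 < xm i := by
          rw [hn]
          exact mul_pos h (hdata.delta_pos i)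
        simp only [hxm, lt_max_iff] at h1
        rcases h1 with h1 | h1
        · omega
        · omega
      have hxmx : xm = -x := by
        funext i
        simp [hxm, max_eq_left (show (0:ℤ) ≤ -(x i) by have := hxneg i; omega)]
      have hx' : x = (-n) • δ := by
        rw [hxmx] at hn
        funext i
        have := congrFun hn i
        simp only [Pi.neg_apply, Pi.smul_apply, smul_eq_mul] at this ⊢
        linarith
      exact delta_ne_isotropic hdata hx (-n) hx'

end AffineRoots
namespace AffineRoots

variable {r : ℕ} {a : I r → I r → ℕ} {δ : Q r}

lemma refl_involutive (hno : ∀ i, a i i = 0) (i : I r) (α : Q r) :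
    refl r a i (refl r a i α) = α := by
  rw [refl, refl, B_sub_left, B_smul_left, B_e_self hno]
  funext j
  simp only [Pi.sub_apply, Pi.smul_apply, smul_eq_mul]
  ring

/-- The reflection as a permutation of `Q`. -/
def sE (hno : ∀ i, a i i = 0) (i : I r) : Equiv.Perm (Q r) where
  toFun := refl r a i
  invFun := refl r a i
  left_inv := refl_involutive hno i
  right_inv := refl_involutive hno i

lemma sE_mem_W (hno : ∀ i, a i i = 0) (i : I r) : sE hno i ∈ W r a :=
  Subgroup.subset_closure ⟨i, fun _ => rfl⟩

/-- Every element of `W` is additive, preserves `B`, and fixes `δ`. -/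
lemma W_props (hdata : AffineData r a δ) {σ : Equiv.Perm (Q r)} (hσ : σ ∈ W r a) :
    (∀ x y : Q r, σ (x + y) = σ x + σ y) ∧
    (∀ x y : Q r, B r a (σ x) (σ y) = B r a x y) ∧ σ δ = δ := by
  induction hσ using Subgroup.closure_induction with
  | mem τ hτ =>
    obtain ⟨i, hi⟩ := hτ
    refine ⟨?_, ?_, ?_⟩
    · intro x y
      simp only [hi, refl, B_add_left]
      rw [add_smul]
      abel
    · intro x y
      simp only [hi, refl]
      rw [B_sub_left, B_sub_right, B_sub_right, B_smul_left, B_smul_right, B_smul_right,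
        B_smul_left, B_e_self hdata.noloops, B_symm hdata.symm (e r i) y]
      ring
    · rw [hi, refl, B_delta_left hdata]
      simp
  | one => exact ⟨fun _ _ => rfl, fun _ _ => rfl, rfl⟩
  | mul τ υ _ _ hτ hυ =>
    obtain ⟨ha1, hb1, hd1⟩ := hτ
    obtain ⟨ha2, hb2, hd2⟩ := hυ
    refine ⟨?_, ?_, ?_⟩
    · intro x y
      simp only [Equiv.Perm.mul_apply, ha2, ha1]
    · intro x y
      simp only [Equiv.Perm.mul_apply, hb1, hb2]
    · simp only [Equiv.Perm.mul_apply, hd2, hd1]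
  | inv τ _ hτ =>
    obtain ⟨ha1, hb1, hd1⟩ := hτ
    refine ⟨?_, ?_, ?_⟩
    · intro x y
      apply τ.injective
      rw [ha1, (show ∀ z, τ (τ⁻¹ z) = z from fun z => τ.apply_symm_apply z), (show ∀ z, τ (τ⁻¹ z) = z from fun z => τ.apply_symm_apply z), (show ∀ z, τ (τ⁻¹ z) = z from fun z => τ.apply_symm_apply z)]
    · intro x y
      rw [← hb1 (τ⁻¹ x) (τ⁻¹ y), (show ∀ z, τ (τ⁻¹ z) = z from fun z => τ.apply_symm_apply z), (show ∀ z, τ (τ⁻¹ z) = z from fun z => τ.apply_symm_apply z)]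
    · apply τ.injective
      rw [(show ∀ z, τ (τ⁻¹ z) = z from fun z => τ.apply_symm_apply z), hd1]

lemma W_zero (hdata : AffineData r a δ) {σ : Equiv.Perm (Q r)} (hσ : σ ∈ W r a) :
    σ 0 = 0 := by
  have h := (W_props hdata hσ).1 0 0
  simp only [add_zero] at h
  exact (right_eq_add.mp h)

lemma W_neg (hdata : AffineData r a δ) {σ : Equiv.Perm (Q r)} (hσ : σ ∈ W r a) (x : Q r) :
    σ (-x) = -σ x := by
  have h := (W_props hdata hσ).1 x (-x)
  rw [add_neg_cancel, W_zero hdata hσ] at h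
  exact eq_neg_of_add_eq_zero_right h.symm

lemma W_zsmul (hdata : AffineData r a δ) {σ : Equiv.Perm (Q r)} (hσ : σ ∈ W r a)
    (n : ℤ) (x : Q r) : σ (n • x) = n • σ x := by
  have hadd := (W_props hdata hσ).1
  exact map_zsmul (AddMonoidHom.mk' σ hadd) n x

/-- real roots facts -/
lemma e_mem_RealRoots (i : I r) : e r i ∈ RealRoots r a :=
  ⟨1, one_mem _, i, rfl⟩

lemma RealRoots_norm_two (hdata : AffineData r a δ) {α : Q r}
    (hα : α ∈ RealRoots r a) : B r a α α = 2 := by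
  obtain ⟨σ, hσ, i, rfl⟩ := hα
  rw [(W_props hdata hσ).2.1, B_e_self hdata.noloops]

lemma RealRoots_apply_mem (hdata : AffineData r a δ) {σ : Equiv.Perm (Q r)}
    (hσ : σ ∈ W r a) {α : Q r} (hα : α ∈ RealRoots r a) : σ α ∈ RealRoots r a := by
  obtain ⟨τ, hτ, i, rfl⟩ := hα
  exact ⟨σ * τ, mul_mem hσ hτ, i, rfl⟩

lemma RealRoots_neg (hdata : AffineData r a δ) {α : Q r}
    (hα : α ∈ RealRoots r a) : -α ∈ RealRoots r a := by
  obtain ⟨τ, hτ, i, rfl⟩ := hα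
  refine ⟨τ * (sE hdata.noloops i), mul_mem hτ (sE_mem_W hdata.noloops i), i, ?_⟩
  have : (sE hdata.noloops i) (e r i) = -(e r i) := by
    show refl r a i (e r i) = -(e r i)
    rw [refl, B_e_self hdata.noloops]
    funext k
    simp [e]
    ring
  rw [Equiv.Perm.mul_apply, this, W_neg hdata hτ]

end AffineRoots
namespace AffineRoots

variable {r : ℕ} {a : I r → I r → ℕ} {δ : Q r}

lemma r_pos (hdata : AffineData r a δ) : 0 < r := by
  rcases Nat.eq_zero_or_pos r with h | h
  · exfalso
    subst h
    have h0 := B_self_delta hdata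
    rw [B] at h0
    simp only [Fin.sum_univ_succ, Fin.sum_univ_zero, add_zero] at h0
    have h1 : (0 : I 0) = (0 : I 0) := rfl
    rw [cartan, if_pos rfl, hdata.noloops, hdata.delta_zero] at h0
    simp at h0
  · exact h

lemma sum_e (i : I r) : (∑ j, e r i j) = 1 := by
  rw [e]
  simp [Pi.single_apply]

lemma pos_norm2_real (hdata : AffineData r a δ) :
    ∀ n : ℕ, ∀ α : Q r, (∀ i, 0 ≤ α i) → B r a α α = 2 → (∑ i, α i) = (n : ℤ) →
      α ∈ RealRoots r a := by
  intro n
  induction n using Nat.strong_induction_on with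
  | _ n IH =>
    intro α hpos h2 hsum
    have hexp : (∑ i, B r a α (e r i) * α i) = 2 := by
      rw [← h2]
      exact (B_basis_expand α α).symm
    have hex : ∃ i, 0 < B r a α (e r i) * α i := by
      by_contra hcon
      push_neg at hcon
      have := Finset.sum_nonpos (s := Finset.univ) (fun i _ => hcon i)
      omega
    obtain ⟨i, hi⟩ := hex
    set k := B r a α (e r i) with hkdef
    have hαi : 0 < α i := by
      rcases lt_trichotomy (α i) 0 with h | h | h
      · exact absurd (hpos i) (by omega)
      · rw [h, mul_zero] at hi; omega
      · exact h
    have hk1 : 0 < k := by nlinarith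
    have hk2 : k ≤ 2 := by
      have := B_e_bound hdata α h2 i
      rw [← hkdef] at this
      nlinarith
    have hsE : ∀ γ : Q r, (sE hdata.noloops i) γ = refl r a i γ := fun _ => rfl
    interval_cases k
    · -- k = 1 : reflect and induct
      set β := refl r a i α with hβ
      have hβval : β = α - (1 : ℤ) • e r i := by rw [hβ, refl, ← hkdef]
      have hβpos : ∀ j, 0 ≤ β j := by
        intro j
        rw [hβval]
        by_cases hji : j = i
        · subst hji
          simp [e, Pi.single_apply]
          omega
        · simp [e, Pi.single_apply, Ne.symm hji]
          exact hpos j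
      have hβ2 : B r a β β = 2 := by
        have hiso := (W_props hdata (sE_mem_W hdata.noloops i)).2.1 α α
        rw [hsE] at hiso
        rw [hβ, hiso, h2]
      have hβsum : (∑ j, β j) = (n : ℤ) - 1 := by
        rw [hβval]
        simp only [Pi.sub_apply, Pi.smul_apply, smul_eq_mul, one_mul]
        rw [Finset.sum_sub_distrib, hsum, sum_e]
      have hn1 : 1 ≤ n := by
        have h0 : 0 ≤ (∑ j, β j) := Finset.sum_nonneg (fun j _ => hβpos j)
        omega
      have hβRR : β ∈ RealRoots r a := by
        apply IH (n - 1) (by omega) β hβpos hβ2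
        rw [hβsum]
        push_cast
        omega
      have : α = (sE hdata.noloops i) β := by
        rw [hsE, hβ, refl_involutive hdata.noloops]
      rw [this]
      exact RealRoots_apply_mem hdata (sE_mem_W hdata.noloops i) hβRR
    · -- k = 2 : α = e_i + m δ
      obtain ⟨m, hm⟩ := B_eq_two_case hdata α h2 i (by rw [← hkdef])
      obtain ⟨j, hji⟩ := Fintype.exists_ne_of_one_lt_card
        (by have := r_pos hdata; simp; omega : 1 < Fintype.card (I r)) i
      have hm0 : 0 ≤ m := by
        have hαj : α j = m * δ j := by
          rw [hm]
          simp [e, Pi.single_apply, hji]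
        have := hpos j
        have hδj := hdata.delta_pos j
        nlinarith
      rcases eq_or_lt_of_le hm0 with hm1 | hm1
      · -- m = 0 : α = e_i
        have : α = e r i := by rw [hm, ← hm1]; simp
        rw [this]
        exact e_mem_RealRoots i
      · -- m ≥ 1 : reflect
        set β := refl r a i α with hβ
        have hβval : β = α - (2 : ℤ) • e r i := by rw [hβ, refl, ← hkdef]
        have hβpos : ∀ l, 0 ≤ β l := by
          intro l
          rw [hβval, hm]
          by_cases hli : l = i
          · subst hli
            simp [e, Pi.single_apply]
            have := hdata.delta_pos l
            nlinarith
          · simp [e, Pi.single_apply, Ne.symm hli]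
            have := hdata.delta_pos l
            nlinarith
        have hβ2 : B r a β β = 2 := by
          have hiso := (W_props hdata (sE_mem_W hdata.noloops i)).2.1 α α
          rw [hsE] at hiso
          rw [hβ, hiso, h2]
        have hβsum : (∑ l, β l) = (n : ℤ) - 2 := by
          rw [hβval]
          simp only [Pi.sub_apply, Pi.smul_apply, smul_eq_mul]
          rw [Finset.sum_sub_distrib, hsum, ← Finset.mul_sum, sum_e]
          ring
        have hn1 : 2 ≤ n := by
          have h0 : 0 ≤ (∑ l, β l) := Finset.sum_nonneg (fun l _ => hβpos l)
          omega
        have hβRR : β ∈ RealRoots r a := by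
          apply IH (n - 2) (by omega) β hβpos hβ2
          rw [hβsum]
          push_cast
          omega
        have : α = (sE hdata.noloops i) β := by
          rw [hsE, hβ, refl_involutive hdata.noloops]
        rw [this]
        exact RealRoots_apply_mem hdata (sE_mem_W hdata.noloops i) hβRR

/-- Every norm-2 vector is a real root. -/
lemma norm2_real (hdata : AffineData r a δ) (x : Q r) (hx : B r a x x = 2) :
    x ∈ RealRoots r a := by
  rcases sign_uniform hdata x hx with h | h
  · have h0 : 0 ≤ (∑ i, x i) := Finset.sum_nonneg (fun i _ => h i)
    exact pos_norm2_real hdata (∑ i, x i).toNat x h hx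
      (by rw [Int.toNat_of_nonneg h0])
  · have hy2 : B r a (-x) (-x) = 2 := by
      have : (-x : Q r) = (-1 : ℤ) • x := by funext i; simp
      rw [this, B_smul_left, B_smul_right, hx]
      ring
    have hyn : ∀ i, 0 ≤ (-x) i := by
      intro i
      simp only [Pi.neg_apply]
      have := h i
      omega
    have h0 : 0 ≤ (∑ i, (-x) i) := Finset.sum_nonneg (fun i _ => hyn i)
    have hyRR := pos_norm2_real hdata (∑ i, (-x) i).toNat (-x) hyn hy2
      (by rw [Int.toNat_of_nonneg h0])
    have := RealRoots_neg hdata hyRR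
    rwa [neg_neg] at this

end AffineRoots
namespace AffineRoots

variable {r : ℕ} {a : I r → I r → ℕ} {δ : Q r}

lemma Fund_delta (hdata : AffineData r a δ) {α : Q r} (hα : α ∈ Fund r a) :
    ∃ n : ℤ, 1 ≤ n ∧ α = n • δ := by
  obtain ⟨hne, hpos, _, hneg⟩ := hα
  have h0 : B r a α α = 0 := by
    refine le_antisymm ?_ (hdata.posSemidef α)
    rw [B_basis_expand]
    apply Finset.sum_nonpos
    intro j _
    have h1 := hneg j
    have h2 := hpos j
    nlinarith
  obtain ⟨n, hn⟩ := isotropic_radical hdata α h0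
  have hα0 : α 0 = n := by
    have := congrFun hn 0
    simp only [Pi.smul_apply, smul_eq_mul, hdata.delta_zero, mul_one] at this
    exact this
  have hn0 : 0 ≤ n := hα0 ▸ hpos 0
  rcases eq_or_lt_of_le hn0 with h | h
  · exfalso
    apply hne
    rw [hn, ← h, zero_smul]
  · exact ⟨n, h, hn⟩

lemma ImRoots_char (hdata : AffineData r a δ) {α : Q r} (hα : α ∈ ImRoots r a) :
    ∃ n : ℤ, n ≠ 0 ∧ α = n • δ := by
  obtain ⟨σ, hσ, β, hβ, hcase⟩ := hα
  obtain ⟨n, hn1, rfl⟩ := Fund_delta hdata hβ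
  have hfix : σ (n • δ) = n • δ := by
    rw [W_zsmul hdata hσ, (W_props hdata hσ).2.2]
  rcases hcase with h | h
  · exact ⟨n, by omega, by rw [h, hfix]⟩
  · exact ⟨-n, by omega, by rw [h, hfix, neg_smul]⟩

lemma Roots_char (hdata : AffineData r a δ) {α : Q r} (hα : α ∈ Roots r a) :
    B r a α α = 2 ∨ ∃ n : ℤ, n ≠ 0 ∧ α = n • δ := by
  rcases hα with h | h
  · exact Or.inl (RealRoots_norm_two hdata h)
  · exact Or.inr (ImRoots_char hdata h)

lemma norm2_mem_Roots (hdata : AffineData r a δ) {x : Q r} (hx : B r a x x = 2) :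
    x ∈ Roots r a := Or.inl (norm2_real hdata x hx)

lemma Rc_norm2 (hdata : AffineData r a δ) {c : Q r →ₗ[ℤ] ℂ} (hc : c δ = 1)
    {α : Q r} (hα : α ∈ Rc r a c) : B r a α α = 2 := by
  obtain ⟨hroot, hczero⟩ := hα
  rcases Roots_char hdata hroot with h | ⟨n, hn0, rfl⟩
  · exact h
  · exfalso
    rw [map_smul, hc] at hczero
    have : (n : ℂ) = 0 := by
      simpa [zsmul_eq_mul] using hczero
    exact hn0 (by exact_mod_cast this)

end AffineRoots
namespace AffineRoots

variable {r : ℕ} {a : I r → I r → ℕ} {δ : Q r}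

lemma B_sum_left' {ι : Type*} (s : Finset ι) (f : ι → Q r) (z : Q r) :
    B r a (∑ i ∈ s, f i) z = ∑ i ∈ s, B r a (f i) z := by
  have h := map_sum (Bf r a) f s
  calc B r a (∑ i ∈ s, f i) z = ((Bf r a) (∑ i ∈ s, f i)) z := rfl
    _ = ((∑ i ∈ s, (Bf r a) (f i))) z := by rw [h]
    _ = ∑ i ∈ s, B r a (f i) z := by rw [LinearMap.coe_sum, Finset.sum_apply]; rfl

lemma B_sum_right' {ι : Type*} (s : Finset ι) (f : ι → Q r) (z : Q r) :
    B r a z (∑ i ∈ s, f i) = ∑ i ∈ s, B r a z (f i) := by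
  exact map_sum ((Bf r a) z) f s

lemma B_sum_sum {ι κ : Type*} (s : Finset ι) (t : Finset κ)
    (m : ι → ℤ) (m' : κ → ℤ) (u : ι → Q r) (v : κ → Q r) :
    B r a (∑ i ∈ s, m i • u i) (∑ j ∈ t, m' j • v j)
      = ∑ i ∈ s, ∑ j ∈ t, m i * m' j * B r a (u i) (v j) := by
  rw [B_sum_left']
  apply Finset.sum_congr rfl
  intro i _
  rw [B_smul_left, B_sum_right', Finset.mul_sum]
  apply Finset.sum_congr rfl
  intro j _
  rw [B_smul_right]
  ring

/-- The set of finite roots, described concretely. -/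
def Sset (r : ℕ) (a : I r → I r → ℕ) : Set (Q r) := {x | x 0 = 0 ∧ B r a x x = 2}

lemma Sset_finite (hdata : AffineData r a δ) : (Sset r a).Finite := by
  set F : Q r → (I r → ℤ) := fun x j => B r a x (e r j) with hF
  have hinj : Set.InjOn F (Sset r a) := by
    intro x hx y hy hxy
    have hall : ∀ β, B r a (x - y) β = 0 := by
      intro β
      rw [B_basis_expand]
      apply Finset.sum_eq_zero
      intro j _
      have : B r a x (e r j) = B r a y (e r j) := congrFun hxy j
      rw [B_sub_left, this]
      ring
    obtain ⟨n, hn⟩ := (hdata.radical _).1 hall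
    have h0 : x 0 - y 0 = n := by
      have := congrFun hn 0
      simpa [hdata.delta_zero] using this
    rw [hx.1, hy.1] at h0
    have hn0 : n = 0 := by omega
    rw [hn0, zero_smul] at hn
    exact sub_eq_zero.mp hn
  have himg : F '' (Sset r a) ⊆ Set.pi Set.univ (fun _ : I r => Set.Icc (-2 : ℤ) 2) := by
    rintro _ ⟨x, hx, rfl⟩
    intro j _
    have := B_e_bound hdata x hx.2 j
    constructor <;> nlinarith
  have hbox : (Set.pi Set.univ (fun _ : I r => Set.Icc (-2 : ℤ) 2)).Finite :=
    Set.Finite.pi (fun _ => Set.finite_Icc _ _)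
  exact Set.Finite.of_finite_image (hbox.subset himg) hinj

section Counting

variable (η : Fin r → Q r) (σ : Equiv.Perm (Fin r))

/-- Evaluation of a combination of basis vectors. -/
lemma chi_apply_zero (m : Fin r → ℤ) : (∑ i, m i • e r ((σ i).succ)) 0 = 0 := by
  rw [Finset.sum_apply]
  apply Finset.sum_eq_zero
  intro i _
  have : e r ((σ i).succ) 0 = 0 := by
    rw [e, Pi.single_apply, if_neg (Ne.symm (Fin.succ_ne_zero _))]
  simp [this]

lemma chi_apply_coord (m : Fin r → ℤ) (i0 : Fin r) :
    (∑ i, m i • e r ((σ i).succ)) ((σ i0).succ) = m i0 := by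
  rw [Finset.sum_apply]
  rw [Finset.sum_eq_single i0]
  · rw [e, Pi.smul_apply, Pi.single_apply, if_pos rfl, smul_eq_mul, mul_one]
  · intro i _ hne
    have hne' : (σ i).succ ≠ (σ i0).succ := by
      simp only [ne_eq, Fin.succ_inj, EmbeddingLike.apply_eq_iff_eq]
      exact hne
    rw [e, Pi.smul_apply, Pi.single_apply, if_neg (Ne.symm hne'), smul_eq_mul, mul_zero]
  · intro h
    exact absurd (Finset.mem_univ i0) h

lemma chi_surj {x : Q r} (hx0 : x 0 = 0) :
    (∑ i, (fun i => x ((σ i).succ)) i • e r ((σ i).succ)) = x := by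
  funext k
  rw [Finset.sum_apply]
  have hre : (∑ i, (x ((σ i).succ) • e r ((σ i).succ)) k)
      = ∑ j : Fin r, x (j.succ) * e r (j.succ) k := by
    rw [← Equiv.sum_comp σ (fun j => x (j.succ) * e r (j.succ) k)]
    apply Finset.sum_congr rfl
    intro i _
    rw [Pi.smul_apply, smul_eq_mul]
  rw [hre]
  rcases Fin.eq_zero_or_eq_succ k with hk | ⟨l, hk⟩
  · subst hk
    rw [hx0]
    apply Finset.sum_eq_zero
    intro j _
    rw [e, Pi.single_apply, if_neg (Ne.symm (Fin.succ_ne_zero _)), mul_zero]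
  · subst hk
    rw [Finset.sum_eq_single l]
    · rw [e, Pi.single_apply, if_pos rfl, mul_one]
    · intro j _ hne
      rw [e, Pi.single_apply, if_neg (fun hc => hne (Fin.succ_inj.mp hc.symm)), mul_zero]
    · intro h
      exact absurd (Finset.mem_univ l) h

end Counting

end AffineRoots
namespace AffineRoots

variable {r : ℕ} {a : I r → I r → ℕ} {δ : Q r}

lemma exists_coords (hdata : AffineData r a δ) (η : Fin r → Q r) (σ : Equiv.Perm (Fin r))
    (hcartan : ∀ i j : Fin r,
      B r a (η i) (η j) = B r a (e r (σ i).succ) (e r (σ j).succ))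
    {x : Q r} (hx : x ∈ Sset r a) :
    ∃ m : Fin r → ℤ, x = ∑ i, m i • (η i - (η i 0) • δ) := by
  classical
  set ψ : (Fin r → ℤ) → Q r := fun m => ∑ i, m i • (η i - (η i 0) • δ) with hψdef
  set χ : (Fin r → ℤ) → Q r := fun m => ∑ i, m i • e r ((σ i).succ) with hχdef
  have hGram : ∀ i j : Fin r, B r a (η i - (η i 0) • δ) (η j - (η j 0) • δ)
      = B r a (e r ((σ i).succ)) (e r ((σ j).succ)) := by
    intro i j
    have h1 : B r a (η i - (η i 0) • δ) (η j - (η j 0) • δ)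
        = B r a (η i) (η j) - (η j 0) * B r a (η i) δ
          - (η i 0) * B r a δ (η j) + (η i 0) * ((η j 0) * B r a δ δ) := by
      rw [B_sub_left, B_sub_right, B_sub_right, B_smul_right, B_smul_left, B_smul_left,
        B_smul_right]
      ring
    rw [h1, B_delta_left hdata, B_delta_right hdata, B_delta_left hdata, ← hcartan]
    ring
  have hBψχ : ∀ m m' : Fin r → ℤ, B r a (ψ m) (ψ m') = B r a (χ m) (χ m') := by
    intro m m'
    rw [hψdef, hχdef]
    simp only
    rw [B_sum_sum, B_sum_sum]
    exact Finset.sum_congr rfl fun i _ => Finset.sum_congr rfl fun j _ => by rw [hGram]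
  have hχ0 : ∀ m, χ m 0 = 0 := fun m => chi_apply_zero σ m
  have hψ0 : ∀ m, ψ m 0 = 0 := by
    intro m
    rw [hψdef]
    simp only [Finset.sum_apply]
    apply Finset.sum_eq_zero
    intro i _
    simp [hdata.delta_zero]
  have hχinj : Function.Injective χ := by
    intro m m' h
    funext i
    have h1 := congrFun h ((σ i).succ)
    simp only [hχdef] at h1
    rw [chi_apply_coord σ m i, chi_apply_coord σ m' i] at h1
    exact h1
  have hχsub : ∀ m m' : Fin r → ℤ, χ (m - m') = χ m - χ m' := by
    intro m m'
    rw [hχdef]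
    simp only [Pi.sub_apply, sub_smul]
    rw [Finset.sum_sub_distrib]
  have hψsub : ∀ m m' : Fin r → ℤ, ψ (m - m') = ψ m - ψ m' := by
    intro m m'
    rw [hψdef]
    simp only [Pi.sub_apply, sub_smul]
    rw [Finset.sum_sub_distrib]
  have hψinj : Function.Injective ψ := by
    intro m m' h
    have hd : ψ (m - m') = 0 := by rw [hψsub, h, sub_self]
    have hB0 : B r a (χ (m - m')) (χ (m - m')) = 0 := by
      rw [← hBψχ, hd]
      simp [B]
    obtain ⟨n, hn⟩ := isotropic_radical hdata _ hB0
    have hn0 : n = 0 := by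
      have := congrFun hn 0
      rw [hχ0, Pi.smul_apply, smul_eq_mul, hdata.delta_zero, mul_one] at this
      omega
    rw [hn0, zero_smul] at hn
    have hz : χ (m - m') = χ 0 := by
      rw [hn, hχdef]
      simp
    have := hχinj hz
    have : m - m' = 0 := this
    exact sub_eq_zero.mp this
  set M : Set (Fin r → ℤ) := {m | B r a (χ m) (χ m) = 2} with hM
  have hχim : χ '' M = Sset r a := by
    apply Set.Subset.antisymm
    · rintro _ ⟨m, hm, rfl⟩
      exact ⟨hχ0 m, hm⟩
    · intro y hy
      refine ⟨fun i => y ((σ i).succ), ?_, ?_⟩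
      · show B r a (χ _) (χ _) = 2
        have hcs : χ (fun i => y ((σ i).succ)) = y := chi_surj σ hy.1
        rw [hcs, hy.2]
      · exact chi_surj σ hy.1
  have hMfin : M.Finite := by
    apply Set.Finite.of_finite_image _ hχinj.injOn
    rw [hχim]
    exact Sset_finite hdata
  have hψim : ψ '' M ⊆ Sset r a := by
    rintro _ ⟨m, hm, rfl⟩
    exact ⟨hψ0 m, by rw [hBψχ m m]; exact hm⟩
  have hcard1 : (ψ '' M).ncard = M.ncard := Set.ncard_image_of_injective M hψinj
  have hcard2 : (χ '' M).ncard = M.ncard := Set.ncard_image_of_injective M hχinj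
  have hkey : ψ '' M = Sset r a := by
    apply Set.eq_of_subset_of_ncard_le hψim _ (Sset_finite hdata)
    rw [hcard1, ← hcard2, hχim]
  have hxim : x ∈ ψ '' M := by rw [hkey]; exact hx
  obtain ⟨m, _, hm⟩ := hxim
  exact ⟨m, hm.symm⟩

end AffineRoots

open AffineRoots in
/-- Assume `c(δ) = 1`, and let `η⁽¹⁾,…,η⁽ʳ⁾ ∈ R_c⁺` be such that for some bijection `σ`
of `{1,…,r}` one has `(η⁽ⁱ⁾,η⁽ʲ⁾) = (e_{σ(i)},e_{σ(j)})` for all `i,j`.  Then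
`{η⁽¹⁾,…,η⁽ʳ⁾}` is a set of simple roots for `R_c`: every element of `R_c⁺` is an
`ℕ`-linear combination of `η⁽¹⁾,…,η⁽ʳ⁾`, and for all integers `m_1,…,m_r` one has
`Σ_i m_i·e_{σ(i)} ∈ Φ` if and only if `Σ_i m_i·η⁽ⁱ⁾ ∈ R_c` (so `R_c` is isomorphic to
`Φ` as a root system). -/
theorem eta_simple_system (r : ℕ) (a : I r → I r → ℕ) (δ : Q r)
    (hdata : AffineData r a δ) (c : Q r →ₗ[ℤ] ℂ) (hc : c δ = 1)
    (η : Fin r → Q r) (hη : ∀ i, η i ∈ RcPos r a c)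
    (σ : Equiv.Perm (Fin r))
    (hcartan : ∀ i j : Fin r,
      B r a (η i) (η j) = B r a (e r (σ i).succ) (e r (σ j).succ)) :
    (∀ α ∈ RcPos r a c, ∃ m : Fin r → ℕ, α = ∑ i, (m i : ℤ) • η i) ∧
    (∀ m : Fin r → ℤ,
      (∑ i, m i • e r (σ i).succ) ∈ Phi r a ↔ (∑ i, m i • η i) ∈ Rc r a c) := by
  have hce : ∀ i : Fin r, c (η i) = 0 := fun i => (hη i).1.2
  have hηpos : ∀ i : Fin r, ∀ k, 0 ≤ η i k := fun i => (hη i).2.2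
  have hB2 : ∀ m : Fin r → ℤ, B r a (∑ i, m i • η i) (∑ i, m i • η i)
      = B r a (∑ i, m i • e r (σ i).succ) (∑ i, m i • e r (σ i).succ) := by
    intro m
    rw [B_sum_sum, B_sum_sum]
    exact Finset.sum_congr rfl fun i _ => Finset.sum_congr rfl fun j _ => by rw [hcartan]
  have hcsum : ∀ m : Fin r → ℤ, c (∑ i, m i • η i) = 0 := by
    intro m
    rw [map_sum]
    apply Finset.sum_eq_zero
    intro i _
    rw [map_smul, hce i, smul_zero]
  constructor
  · -- Part 1: every element of R_c⁺ is an ℕ-combination of the η's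
    intro α hα
    have hαroot : α ∈ Roots r a := hα.1.1
    have hαc : c α = 0 := hα.1.2
    have hαpos : ∀ k, 0 ≤ α k := hα.2.2
    have hα2 : B r a α α = 2 := Rc_norm2 hdata hc hα.1
    set x : Q r := α - (α 0) • δ with hxdef
    have hx0 : x 0 = 0 := by
      simp [hxdef, hdata.delta_zero]
    have hBx : B r a x x = 2 := by
      rw [hxdef]
      have h1 : B r a (α - (α 0) • δ) (α - (α 0) • δ)
          = B r a α α - (α 0) * B r a α δ - (α 0) * B r a δ α
            + (α 0) * ((α 0) * B r a δ δ) := by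
        rw [B_sub_left, B_sub_right, B_sub_right, B_smul_right, B_smul_left, B_smul_left,
          B_smul_right]
        ring
      rw [h1, B_delta_left hdata, B_delta_right hdata, B_delta_left hdata, hα2]
      ring
    obtain ⟨m, hm⟩ := exists_coords hdata η σ hcartan ⟨hx0, hBx⟩
    have hsplit : ∑ i, m i • (η i - (η i 0) • δ)
        = (∑ i, m i • η i) - (∑ i, m i * (η i 0)) • δ := by
      simp only [smul_sub, smul_smul]
      rw [Finset.sum_sub_distrib, ← Finset.sum_smul]
    have hKeq : α = (∑ i, m i • η i) + (α 0 - ∑ i, m i * (η i 0)) • δ := by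
      have : x = (∑ i, m i • η i) - (∑ i, m i * (η i 0)) • δ := by rw [hm, hsplit]
      rw [hxdef] at this
      funext k
      have h2 := congrFun this k
      simp only [Pi.sub_apply, Pi.add_apply, Pi.smul_apply, smul_eq_mul] at h2 ⊢
      linarith
    have hK0 : (α 0 - ∑ i, m i * (η i 0)) = 0 := by
      have hcα := congrArg c hKeq
      rw [map_add, map_smul, hc, hcsum m, hαc, zero_add] at hcα
      have h3 : ((α 0 - ∑ i, m i * η i 0 : ℤ) : ℂ) = 0 := by
        simpa [zsmul_eq_mul] using hcα.symm
      exact_mod_cast h3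
    have hαm : α = ∑ i, m i • η i := by
      rw [hKeq, hK0, zero_smul, add_zero]
    -- sign analysis
    set β : Q r := ∑ i, m i • e r (σ i).succ with hβdef
    have hβ2 : B r a β β = 2 := by
      rw [hβdef, ← hB2 m, ← hαm, hα2]
    have hmval : ∀ i, β ((σ i).succ) = m i := by
      intro i
      rw [hβdef]
      exact chi_apply_coord σ m i
    rcases sign_uniform hdata β hβ2 with hp | hn
    · refine ⟨fun i => (m i).toNat, ?_⟩
      rw [hαm]
      apply Finset.sum_congr rfl
      intro i _
      rw [Int.toNat_of_nonneg (by rw [← hmval i]; exact hp _)]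
    · exfalso
      have hmneg : ∀ i, m i ≤ 0 := fun i => by rw [← hmval i]; exact hn _
      have hα0 : ∀ k, α k ≤ 0 := by
        intro k
        rw [hαm]
        rw [Finset.sum_apply]
        apply Finset.sum_nonpos
        intro i _
        simp only [Pi.smul_apply, smul_eq_mul]
        exact mul_nonpos_of_nonpos_of_nonneg (hmneg i) (hηpos i k)
      have : α = 0 := funext fun k => le_antisymm (hα0 k) (hαpos k)
      rw [this] at hα2
      simp [B] at hα2
  · -- Part 2: root correspondence
    intro m
    have hβ0 : (∑ i, m i • e r (σ i).succ) 0 = 0 := chi_apply_zero σ m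
    constructor
    · intro hβΦ
      obtain ⟨hβroot, hβz⟩ := hβΦ
      have hβ2 : B r a (∑ i, m i • e r (σ i).succ) (∑ i, m i • e r (σ i).succ) = 2 := by
        rcases Roots_char hdata hβroot with h | ⟨n, hn0, hne⟩
        · exact h
        · exfalso
          rw [hne] at hβz
          rw [Pi.smul_apply, smul_eq_mul, hdata.delta_zero, mul_one] at hβz
          exact hn0 hβz
      exact ⟨norm2_mem_Roots hdata (by rw [hB2 m]; exact hβ2), hcsum m⟩
    · intro hγ
      have hγ2 : B r a (∑ i, m i • η i) (∑ i, m i • η i) = 2 := Rc_norm2 hdata hc hγ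
      have hβ2 : B r a (∑ i, m i • e r (σ i).succ) (∑ i, m i • e r (σ i).succ) = 2 := by
        rw [← hB2 m]; exact hγ2
      exact ⟨norm2_mem_Roots hdata hβ2, hβ0⟩
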